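/- Completeness of FBI+cut: for any well-formed unfocused polarised sequent Γ ⊢ N, if the depolarised nested sequent ⌊Γ⌋ ⊢ ⌊N⌋ is provable in ηLBI, then Γ ⊢ N is provable in FBI+cut. -/

import Mathlib

namespace BIPaper

/-- Formulas of BI: `φ ::= ⊤ | ⊥ | I | A | φ∧φ | φ∨φ | φ→φ | φ∗φ | φ−∗φ`. -/
inductive Formula : Type where
  | atom (a : ℕ)
  | top
  | bot
  | unit
  | and (φ ψ : Formula)
  | or (φ ψ : Formula)
  | imp (φ ψ : Formula)
  | star (φ ψ : Formula)
  | wand (φ ψ : Formula)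
/-- Two-sorted nests (with leaves of type `α`), represented as finite-branching
trees whose `plus`/`times` nodes carry lists; lists are regarded as multisets
via the equivalence `NestEq` below, which plays the role of equality of
two-sorted nested multisets. -/
inductive Nest (α : Type) : Type where
  | frm (a : α)
  | plus (l : List (Nest α))
  | times (l : List (Nest α))

variable {α β : Type}

def Nest.flatP : Nest α → List (Nest α)
  | .plus l => l
  | x => [x]

def Nest.flatT : Nest α → List (Nest α)
  | .times l => l
  | x => [x]

/-- Smart additive multiset constructor: merges additive children into the
ambient additive multiset and promotes singletons. -/
def nplus (l : List (Nest α)) : Nest α :=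
  match l.flatMap Nest.flatP with
  | [x] => x
  | l' => .plus l'

/-- Smart multiplicative multiset constructor. -/
def ntimes (l : List (Nest α)) : Nest α :=
  match l.flatMap Nest.flatT with
  | [x] => x
  | l' => .times l'

/-- Nested contexts `Γ{·}`: a nest with a hole inside one of its multisets
(or at the root). -/
inductive NCtx (α : Type) : Type where
  | hole
  | plus (l : List (Nest α)) (C : NCtx α)
  | times (l : List (Nest α)) (C : NCtx α)

/-- Filling the hole of a nested context (with the implicit merging and
promotion in the syntax tree). -/
def NCtx.fill : NCtx α → Nest α → Nest α
  | .hole, x => x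
  | .plus l C, x => nplus (C.fill x :: l)
  | .times l C, x => ntimes (C.fill x :: l)

mutual
/-- Equality of nests qua nested multisets: the lists in the two nests agree
up to permutation, recursively. -/
inductive NestEq : Nest α → Nest α → Prop where
  | frm (a : α) : NestEq (.frm a) (.frm a)
  | plus : NListPerm l l' → NestEq (.plus l) (.plus l')
  | times : NListPerm l l' → NestEq (.times l) (.times l')

inductive NListPerm : List (Nest α) → List (Nest α) → Prop where
  | nil : NListPerm [] []
  | cons : NestEq x y → NListPerm l l' → NListPerm (x :: l) (y :: l')
  | swap : NestEq x x' → NestEq y y' → NListPerm l l' →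
      NListPerm (x :: y :: l) (y' :: x' :: l')
  | trans : NListPerm l₁ l₂ → NListPerm l₂ l₃ → NListPerm l₁ l₃
end

/-- All leaves of a nest satisfy `p`. -/
inductive Nest.All (p : α → Prop) : Nest α → Prop where
  | frm : p a → Nest.All p (.frm a)
  | plus : (∀ x ∈ l, Nest.All p x) → Nest.All p (.plus l)
  | times : (∀ x ∈ l, Nest.All p x) → Nest.All p (.times l)

def Nest.notPlusRoot : Nest α → Prop
  | .plus _ => False
  | _ => True

def Nest.notTimesRoot : Nest α → Prop
  | .times _ => False
  | _ => True

/-- Well-formedness of a nest according to the two-sorted grammar: multisets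
are never singletons, and additive (resp. multiplicative) multisets contain
only formulas and multiplicative (resp. additive) nests. -/
inductive Nest.WF : Nest α → Prop where
  | frm (a : α) : Nest.WF (.frm a)
  | plus : l.length ≠ 1 → (∀ x ∈ l, Nest.WF x) → (∀ x ∈ l, Nest.notPlusRoot x) →
      Nest.WF (.plus l)
  | times : l.length ≠ 1 → (∀ x ∈ l, Nest.WF x) → (∀ x ∈ l, Nest.notTimesRoot x) →
      Nest.WF (.times l)

mutual
/-- Leafwise map of nests. -/
def Nest.map (f : α → β) : Nest α → Nest β
  | .frm a => .frm (f a)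
  | .plus l => .plus (Nest.mapList f l)
  | .times l => .times (Nest.mapList f l)

def Nest.mapList (f : α → β) : List (Nest α) → List (Nest β)
  | [] => []
  | x :: xs => Nest.map f x :: Nest.mapList f xs
end
/-- The nested sequent calculus ηLBI (system `ηLBI`, Figure 2): the rules of
LBI transcribed to two-sorted nests, with exchange absorbed by the multiset
structure (here: the explicit `exch` rule for the list representation of
multisets), weakening deleted, and the weakening-absorbing rules
`Ax'`, `I'`, `⊤'`, `∗'R`, `−∗'L` added (retaining `Ax`, `∗R`, `−∗L`, `IR`,
`⊤R`); there is no cut rule. -/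
inductive NProof : Nest Formula → Formula → Prop where
  | ax (φ) : NProof (.frm φ) φ
  | axP (a : ℕ) (l : List (Nest Formula)) :
      NProof (nplus (.frm (.atom a) :: l)) (.atom a)
  | exch : NProof Γ φ → NestEq Γ Γ' → NProof Γ' φ
  | contr (C : NCtx Formula) : NProof (C.fill (nplus [Γ', Γ'])) φ →
      NProof (C.fill Γ') φ
  | botL (C : NCtx Formula) (φ) : NProof (C.fill (.frm .bot)) φ
  | topR : NProof (.plus []) .top
  | topW (Γ : Nest Formula) : NProof Γ .top
  | unitR : NProof (.times []) .unit
  | unitW (l : List (Nest Formula)) : NProof (nplus (.times [] :: l)) .unit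
  | unitL (C : NCtx Formula) : NProof (C.fill (.times [])) φ →
      NProof (C.fill (.frm .unit)) φ
  | andL (C : NCtx Formula) : NProof (C.fill (nplus [.frm φ, .frm ψ])) χ →
      NProof (C.fill (.frm (.and φ ψ))) χ
  | andR : NProof Γ φ → NProof Δ ψ → NProof (nplus [Γ, Δ]) (.and φ ψ)
  | orL (C : NCtx Formula) : NProof (C.fill (.frm φ)) χ → NProof (C.fill (.frm ψ)) χ →
      NProof (C.fill (.frm (.or φ ψ))) χ
  | orR1 : NProof Γ φ → NProof Γ (.or φ ψ)
  | orR2 : NProof Γ ψ → NProof Γ (.or φ ψ)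
  | impL (C : NCtx Formula) : NProof Δ φ → NProof (C.fill (.frm ψ)) χ →
      NProof (C.fill (nplus [Δ, .frm (.imp φ ψ)])) χ
  | impR : NProof (nplus [Γ, .frm φ]) ψ → NProof Γ (.imp φ ψ)
  | starL (C : NCtx Formula) : NProof (C.fill (ntimes [.frm φ, .frm ψ])) χ →
      NProof (C.fill (.frm (.star φ ψ))) χ
  | starR : NProof Γ φ → NProof Δ ψ → NProof (ntimes [Γ, Δ]) (.star φ ψ)
  | starR' (l : List (Nest Formula)) : NProof Γ φ → NProof Δ ψ →
      NProof (nplus (ntimes [Γ, Δ] :: l)) (.star φ ψ)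
  | wandL (C : NCtx Formula) : NProof Δ φ → NProof (C.fill (.frm ψ)) χ →
      NProof (C.fill (ntimes [Δ, .frm (.wand φ ψ)])) χ
  | wandL' (C : NCtx Formula) : NProof Δ' φ →
      NProof (C.fill (ntimes [Δ'', .frm ψ])) χ →
      NProof (C.fill (ntimes [Δ', Δ'', nplus [Δ''', .frm (.wand φ ψ)]])) χ
  | wandR : NProof (ntimes [Γ, .frm φ]) ψ → NProof Γ (.wand φ ψ)
mutual
/-- Positive polarised formulas: `P,Q ::= ↓N | A⁺ | P∨Q | P∗Q | P∧⁺Q | ⊤⁺ | I | ⊥`. -/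
inductive PForm : Type where
  | atom (a : ℕ)        -- A⁺
  | shiftD (N : NForm)  -- ↓N
  | or (P Q : PForm)
  | star (P Q : PForm)
  | and (P Q : PForm)   -- ∧⁺
  | top                 -- ⊤⁺
  | unit                -- I
  | bot

/-- Negative polarised formulas: `N,M ::= ↑P | A⁻ | P→N | P−∗N | N∧⁻M | ⊤⁻`. -/
inductive NForm : Type where
  | atom (a : ℕ)        -- A⁻
  | shiftU (P : PForm)  -- ↑P
  | imp (P : PForm) (N : NForm)
  | wand (P : PForm) (N : NForm)
  | and (N M : NForm)   -- ∧⁻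
  | top                 -- ⊤⁻
end

mutual
/-- Depolarisation `⌊·⌋` of a positive formula: erase shifts and polarity
annotations. -/
def PForm.dep : PForm → Formula
  | .atom a => .atom a
  | .shiftD N => N.dep
  | .or P Q => .or P.dep Q.dep
  | .star P Q => .star P.dep Q.dep
  | .and P Q => .and P.dep Q.dep
  | .top => .top
  | .unit => .unit
  | .bot => .bot

/-- Depolarisation `⌊·⌋` of a negative formula. -/
def NForm.dep : NForm → Formula
  | .atom a => .atom a
  | .shiftU P => P.dep
  | .imp P N => .imp P.dep N.dep
  | .wand P N => .wand P.dep N.dep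
  | .and N M => .and N.dep M.dep
  | .top => .top
end

/-- Left-neutral formulas `L ::= ↓N | A⁺`. -/
def PForm.Neutral : PForm → Prop
  | .atom _ => True
  | .shiftD _ => True
  | _ => False

/-- Right-neutral formulas `R ::= ↑P | A⁻`. -/
def NForm.Neutral : NForm → Prop
  | .atom _ => True
  | .shiftU _ => True
  | _ => False

mutual
/-- Well-formedness of a positive formula w.r.t. a partition `pol` of the
propositional letters (`pol a = true` iff `A ∈ P⁺`). -/
def PForm.WFpol (pol : ℕ → Bool) : PForm → Prop
  | .atom a => pol a = true
  | .shiftD N => N.WFpol pol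
  | .or P Q => P.WFpol pol ∧ Q.WFpol pol
  | .star P Q => P.WFpol pol ∧ Q.WFpol pol
  | .and P Q => P.WFpol pol ∧ Q.WFpol pol
  | .top => True
  | .unit => True
  | .bot => True

/-- Well-formedness of a negative formula w.r.t. the partition `pol`. -/
def NForm.WFpol (pol : ℕ → Bool) : NForm → Prop
  | .atom a => pol a = false
  | .shiftU P => P.WFpol pol
  | .imp P N => P.WFpol pol ∧ N.WFpol pol
  | .wand P N => P.WFpol pol ∧ N.WFpol pol
  | .and N M => N.WFpol pol ∧ M.WFpol pol
  | .top => True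
end

/-- Leaves of polarised nests: either an (unfocused) positive formula, or a
negative formula under left focus `[N]`. -/
inductive Leaf : Type where
  | pos (P : PForm)
  | focN (N : NForm)

/-- Depolarisation of a leaf. -/
def Leaf.dep : Leaf → Formula
  | .pos P => P.dep
  | .focN N => N.dep

/-- A leaf is an ordinary (unfocused) positive formula. -/
def Leaf.IsPos : Leaf → Prop
  | .pos _ => True
  | .focN _ => False

/-- A leaf is a left-neutral positive formula (for neutral nests `Γ⃗`). -/
def Leaf.IsNeutral : Leaf → Prop
  | .pos P => P.Neutral
  | .focN _ => False

/-- Well-formedness of a leaf w.r.t. the partition `pol`. -/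
def Leaf.WFpol (pol : ℕ → Bool) : Leaf → Prop
  | .pos P => P.WFpol pol
  | .focN N => N.WFpol pol

/-- `Γ` is a positive (focus-free) nest. -/
def PosNest (Γ : Nest Leaf) : Prop := Γ.All Leaf.IsPos

/-- `Γ⃗` is a neutral nest. -/
def NeutralNest (Γ : Nest Leaf) : Prop := Γ.All Leaf.IsNeutral

/-- A positive formula as a (singleton) polarised nest. -/
def pf (P : PForm) : Nest Leaf := .frm (.pos P)

/-- A left-focused negative formula `[N]` as a (singleton) polarised nest. -/
def nf (N : NForm) : Nest Leaf := .frm (.focN N)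

/-- Polarised sequents: unfocused `Γ ⊢ N`, right-focused `Γ⃗ ⊢ [P]`, and
left-focused `Γ⃗{[N]} ⊢ R` (the focused formula is recorded as a `Leaf.focN`
leaf of the nest). -/
inductive FSeq : Type where
  | unf (Γ : Nest Leaf) (N : NForm)
  | rfoc (Γ : Nest Leaf) (P : PForm)
  | lfoc (Γ : Nest Leaf) (R : NForm)
/-- The focused system FBI (Figure 3) on polarised nested sequents, together
with an optional cut rule: `FBI b S` means the polarised sequent `S` is
derivable, where the flag `b` permits the `cut` rule (so `FBI false` is FBI
and `FBI true` is FBI+cut).  The rules are the polarised nested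
transcriptions of the ηLBI rules, the shift rules `↑R`, `↑L`, `↓R`, `↓L`,
contraction, exchange (the multiset structure of nests, made explicit for the
list representation), and the axioms `Ax⁺`, `Ax⁻`, `P : ↓↑P ⊢ [P]` and
`N : [N] ⊢ ↑↓N`. -/
inductive FBI : Bool → FSeq → Prop where
  -- axioms
  | axP (a : ℕ) (l : List (Nest Leaf)) (h : ∀ Λ ∈ l, NeutralNest Λ) :
      FBI b (.rfoc (nplus (pf (.atom a) :: l)) (.atom a))
  | axN (a : ℕ) : FBI b (.lfoc (nf (.atom a)) (.atom a))
  | ruleP (P : PForm) : FBI b (.rfoc (pf (.shiftD (.shiftU P))) P)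
  | ruleN (N : NForm) : FBI b (.lfoc (nf N) (.shiftU (.shiftD N)))
  -- unfocused right rules
  | topNR (Γ : Nest Leaf) : FBI b (.unf Γ .top)
  | andNR : FBI b (.unf Γ N) → FBI b (.unf Γ M) → FBI b (.unf Γ (.and N M))
  | impR : FBI b (.unf (nplus [Γ, pf P]) N) → FBI b (.unf Γ (.imp P N))
  | wandR : FBI b (.unf (ntimes [Γ, pf P]) N) → FBI b (.unf Γ (.wand P N))
  -- unfocused left rules
  | botL (C : NCtx Leaf) (N : NForm) : FBI b (.unf (C.fill (pf .bot)) N)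
  | unitL (C : NCtx Leaf) : FBI b (.unf (C.fill (.times [])) N) →
      FBI b (.unf (C.fill (pf .unit)) N)
  | topPL (C : NCtx Leaf) : FBI b (.unf (C.fill (.plus [])) N) →
      FBI b (.unf (C.fill (pf .top)) N)
  | andPL (C : NCtx Leaf) : FBI b (.unf (C.fill (nplus [pf P, pf Q])) N) →
      FBI b (.unf (C.fill (pf (.and P Q))) N)
  | orL (C : NCtx Leaf) : FBI b (.unf (C.fill (pf P)) N) →
      FBI b (.unf (C.fill (pf Q)) N) → FBI b (.unf (C.fill (pf (.or P Q))) N)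
  | starL (C : NCtx Leaf) : FBI b (.unf (C.fill (ntimes [pf P, pf Q])) N) →
      FBI b (.unf (C.fill (pf (.star P Q))) N)
  -- shift rules
  | upR : NeutralNest Γ → FBI b (.rfoc Γ P) → FBI b (.unf Γ (.shiftU P))
  | downR : FBI b (.unf Γ N) → FBI b (.rfoc Γ (.shiftD N))
  | downL (C : NCtx Leaf) : NForm.Neutral R → FBI b (.lfoc (C.fill (nf N)) R) →
      FBI b (.unf (C.fill (pf (.shiftD N))) R)
  | upL (C : NCtx Leaf) : FBI b (.unf (C.fill (pf P)) R) →
      FBI b (.lfoc (C.fill (nf (.shiftU P))) R)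
  -- right-focused rules
  | orR1 : FBI b (.rfoc Γ P) → FBI b (.rfoc Γ (.or P Q))
  | orR2 : FBI b (.rfoc Γ Q) → FBI b (.rfoc Γ (.or P Q))
  | starR (l : List (Nest Leaf)) : FBI b (.rfoc Γ P) → FBI b (.rfoc Δ Q) →
      FBI b (.rfoc (nplus (ntimes [Γ, Δ] :: l)) (.star P Q))
  | andPR : FBI b (.rfoc Γ P) → FBI b (.rfoc Δ Q) →
      FBI b (.rfoc (nplus [Γ, Δ]) (.and P Q))
  | topPR (Γ : Nest Leaf) : FBI b (.rfoc Γ .top)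
  | unitR (l : List (Nest Leaf)) : FBI b (.rfoc (nplus (.times [] :: l)) .unit)
  -- left-focused rules
  | andNL1 (C : NCtx Leaf) : FBI b (.lfoc (C.fill (nf N)) R) →
      FBI b (.lfoc (C.fill (nf (.and N M))) R)
  | andNL2 (C : NCtx Leaf) : FBI b (.lfoc (C.fill (nf M)) R) →
      FBI b (.lfoc (C.fill (nf (.and N M))) R)
  | impL (C : NCtx Leaf) : FBI b (.rfoc Δ P) → FBI b (.lfoc (C.fill (nf N)) R) →
      FBI b (.lfoc (C.fill (nplus [Δ, nf (.imp P N)])) R)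
  | wandL (C : NCtx Leaf) : FBI b (.rfoc Δ P) →
      FBI b (.lfoc (C.fill (ntimes [Δ', nf N])) R) →
      FBI b (.lfoc (C.fill (ntimes [Δ, Δ', nplus [Δ'', nf (.wand P N)]])) R)
  -- structural rules
  | contr (C : NCtx Leaf) : FBI b (.unf (C.fill (nplus [Γ', Γ'])) N) →
      FBI b (.unf (C.fill Γ') N)
  | exchU : FBI b (.unf Γ N) → NestEq Γ Γ' → FBI b (.unf Γ' N)
  | exchR : FBI b (.rfoc Γ P) → NestEq Γ Γ' → FBI b (.rfoc Γ' P)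
  | exchL : FBI b (.lfoc Γ R) → NestEq Γ Γ' → FBI b (.lfoc Γ' R)
  -- the cut rule (all well-formed instances; `φ⃗` is the cut formula possibly
  -- prefixed with one additional shift)
  | cutN (C : NCtx Leaf) : FBI true (.unf Δ N) →
      FBI true (.unf (C.fill (pf (.shiftD N))) M) → FBI true (.unf (C.fill Δ) M)
  | cutNL (C : NCtx Leaf) : FBI true (.unf Δ N) →
      FBI true (.lfoc (C.fill (pf (.shiftD N))) R) → FBI true (.lfoc (C.fill Δ) R)
  | cutP (C : NCtx Leaf) : FBI true (.rfoc Δ P) →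
      FBI true (.unf (C.fill (pf P)) M) → FBI true (.unf (C.fill Δ) M)
  | cutPR (C : NCtx Leaf) : FBI true (.rfoc Δ P) →
      FBI true (.rfoc (C.fill (pf P)) Q) → FBI true (.rfoc (C.fill Δ) Q)
  | cutPL (C : NCtx Leaf) : FBI true (.rfoc Δ P) →
      FBI true (.lfoc (C.fill (pf P)) R) → FBI true (.lfoc (C.fill Δ) R)

/-! ### Auxiliary infrastructure -/

section Infra
variable {α β : Type}

/-- the "mk" of `nplus` -/
def mkP : List (Nest α) → Nest α
  | [x] => x
  | l => .plus l

def mkT : List (Nest α) → Nest α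
  | [x] => x
  | l => .times l

theorem nplus_def (l : List (Nest α)) : nplus l = mkP (l.flatMap Nest.flatP) := by
  unfold nplus mkP
  rcases h : l.flatMap Nest.flatP with _ | ⟨x, _ | ⟨y, t⟩⟩ <;> rfl

theorem ntimes_def (l : List (Nest α)) : ntimes l = mkT (l.flatMap Nest.flatT) := by
  unfold ntimes mkT
  rcases h : l.flatMap Nest.flatT with _ | ⟨x, _ | ⟨y, t⟩⟩ <;> rfl

mutual
theorem NestEq.refl : ∀ (x : Nest α), NestEq x x
  | .frm a => .frm a
  | .plus l => .plus (NListPerm.refl l)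
  | .times l => .times (NListPerm.refl l)
theorem NListPerm.refl : ∀ (l : List (Nest α)), NListPerm l l
  | [] => .nil
  | x :: xs => .cons (NestEq.refl x) (NListPerm.refl xs)
end

theorem NestEq.symm {x y : Nest α} (h : NestEq x y) : NestEq y x :=
  NestEq.rec (motive_1 := fun a b _ => NestEq b a)
    (motive_2 := fun l l' _ => NListPerm l' l)
    (fun a => .frm a)
    (fun _ ih => .plus ih)
    (fun _ ih => .times ih)
    (.nil)
    (fun _ _ ih1 ih2 => .cons ih1 ih2)
    (fun _ _ _ ih1 ih2 ih3 => .swap ih2 ih1 ih3)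
    (fun _ _ ih1 ih2 => .trans ih2 ih1)
    h

theorem NListPerm.symm {l l' : List (Nest α)} (h : NListPerm l l') : NListPerm l' l :=
  NListPerm.rec (motive_1 := fun a b _ => NestEq b a)
    (motive_2 := fun l l' _ => NListPerm l' l)
    (fun a => .frm a)
    (fun _ ih => .plus ih)
    (fun _ ih => .times ih)
    (.nil)
    (fun _ _ ih1 ih2 => .cons ih1 ih2)
    (fun _ _ _ ih1 ih2 ih3 => .swap ih2 ih1 ih3)
    (fun _ _ ih1 ih2 => .trans ih2 ih1)
    h

theorem NestEq.trans : ∀ {x y z : Nest α}, NestEq x y → NestEq y z → NestEq x z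
  | _, _, _, .frm a, .frm _ => .frm a
  | _, _, _, .plus p, .plus q => .plus (p.trans q)
  | _, _, _, .times p, .times q => .times (p.trans q)

@[elab_as_elim]
theorem NListPerm.inductionOn {motive : List (Nest α) → List (Nest α) → Prop}
    {l l' : List (Nest α)} (h : NListPerm l l')
    (nil : motive [] [])
    (cons : ∀ {x y : Nest α} {l l' : List (Nest α)}, NestEq x y → NListPerm l l' →
      motive l l' → motive (x :: l) (y :: l'))
    (swap : ∀ {x x' y y' : Nest α} {l l' : List (Nest α)}, NestEq x x' → NestEq y y' →
      NListPerm l l' → motive l l' → motive (x :: y :: l) (y' :: x' :: l'))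
    (trans : ∀ {l₁ l₂ l₃ : List (Nest α)}, NListPerm l₁ l₂ → NListPerm l₂ l₃ →
      motive l₁ l₂ → motive l₂ l₃ → motive l₁ l₃) : motive l l' :=
  NListPerm.rec (motive_1 := fun _ _ _ => True) (motive_2 := fun a b _ => motive a b)
    (fun _ => trivial) (fun _ _ => trivial) (fun _ _ => trivial)
    nil (fun e p _ ih => cons e p ih) (fun e1 e2 p _ _ ih => swap e1 e2 p ih)
    (fun p q ih1 ih2 => trans p q ih1 ih2) h

theorem NListPerm.ofPerm : ∀ {l l' : List (Nest α)}, l.Perm l' → NListPerm l l' := by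
  intro l l' h
  induction h with
  | nil => exact .nil
  | cons x _ ih => exact .cons (NestEq.refl x) ih
  | swap x y l => exact .swap (NestEq.refl y) (NestEq.refl x) (NListPerm.refl l)
  | trans _ _ ih1 ih2 => exact .trans ih1 ih2

theorem NListPerm.length_eq {l l' : List (Nest α)} (h : NListPerm l l') :
    l.length = l'.length := by
  refine NListPerm.inductionOn h rfl ?_ ?_ ?_
  · intro _ _ _ _ _ _ ih; simpa using ih
  · intro _ _ _ _ _ _ _ _ _ ih; simpa using ih
  · intro _ _ _ _ _ ih1 ih2; omega

theorem NListPerm.append {a b c d : List (Nest α)} (h1 : NListPerm a b)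
    (h2 : NListPerm c d) : NListPerm (a ++ c) (b ++ d) := by
  have main : ∀ {a b : List (Nest α)}, NListPerm a b →
      ∀ c d, NListPerm c d → NListPerm (a ++ c) (b ++ d) := by
    intro a b h1
    refine NListPerm.inductionOn h1 (fun c d h2 => h2) ?_ ?_ ?_
    · intro _ _ _ _ e _ ih c d h2; exact .cons e (ih c d h2)
    · intro _ _ _ _ _ _ e1 e2 _ ih c d h2; exact .swap e1 e2 (ih c d h2)
    · intro _ _ _ _ _ ih1 ih2 c d h2
      exact .trans (ih1 c c (NListPerm.refl c)) (ih2 c d h2)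
  exact main h1 c d h2

theorem NListPerm.singleton {l l' : List (Nest α)} (h : NListPerm l l') :
    ∀ a, l = [a] → ∃ b, l' = [b] ∧ NestEq a b := by
  refine NListPerm.inductionOn h ?_ ?_ ?_ ?_
  · intro a h; cases h
  · intro x y t t' e p ih a h
    obtain ⟨rfl, rfl⟩ : x = a ∧ t = [] := by cases h; exact ⟨rfl, rfl⟩
    have : t'.length = 0 := by simpa using p.length_eq.symm
    exact ⟨y, by simp [List.length_eq_zero_iff.mp this], e⟩
  · intro _ _ _ _ _ _ _ _ _ _ a h; cases h
  · intro _ _ _ p q ih1 ih2 a h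
    obtain ⟨b, rfl, e1⟩ := ih1 a h
    obtain ⟨c, rfl, e2⟩ := ih2 b rfl
    exact ⟨c, rfl, e1.trans e2⟩

theorem mkP_perm {l l' : List (Nest α)} (h : NListPerm l l') :
    NestEq (mkP l) (mkP l') := by
  match l, l', h with
  | [], l', h =>
      have : l'.length = 0 := by simpa using h.length_eq.symm
      rw [List.length_eq_zero_iff.mp this]; exact NestEq.refl _
  | [a], l', h =>
      obtain ⟨b, rfl, e⟩ := h.singleton a rfl
      exact e
  | a :: b :: t, l', h =>
      have hl : l'.length = (a :: b :: t).length := h.length_eq.symm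
      match l', hl with
      | c :: d :: t', _ => exact .plus h

theorem mkT_perm {l l' : List (Nest α)} (h : NListPerm l l') :
    NestEq (mkT l) (mkT l') := by
  match l, l', h with
  | [], l', h =>
      have : l'.length = 0 := by simpa using h.length_eq.symm
      rw [List.length_eq_zero_iff.mp this]; exact NestEq.refl _
  | [a], l', h =>
      obtain ⟨b, rfl, e⟩ := h.singleton a rfl
      exact e
  | a :: b :: t, l', h =>
      have hl : l'.length = (a :: b :: t).length := h.length_eq.symm
      match l', hl with
      | c :: d :: t', _ => exact .times h

theorem NestEq.flatP_congr : ∀ {x y : Nest α}, NestEq x y → NListPerm x.flatP y.flatP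
  | _, _, .frm a => .cons (.frm a) .nil
  | _, _, .plus p => p
  | _, _, .times p => .cons (.times p) .nil

theorem NestEq.flatT_congr : ∀ {x y : Nest α}, NestEq x y → NListPerm x.flatT y.flatT
  | _, _, .frm a => .cons (.frm a) .nil
  | _, _, .times p => p
  | _, _, .plus p => .cons (.plus p) .nil

theorem NListPerm.flatMapP {l l' : List (Nest α)} (h : NListPerm l l') :
    NListPerm (l.flatMap Nest.flatP) (l'.flatMap Nest.flatP) := by
  refine NListPerm.inductionOn h .nil ?_ ?_ ?_
  · intro _ _ _ _ e _ ih; exact (e.flatP_congr).append ih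
  · intro x x' y y' t t' e1 e2 p ih
    refine .trans (.ofPerm ?_) (((e2.flatP_congr).append ((e1.flatP_congr).append ih)))
    simp only [List.flatMap_cons]
    exact List.perm_append_comm_assoc _ _ _
  · intro _ _ _ _ _ ih1 ih2; exact .trans ih1 ih2

theorem NListPerm.flatMapT {l l' : List (Nest α)} (h : NListPerm l l') :
    NListPerm (l.flatMap Nest.flatT) (l'.flatMap Nest.flatT) := by
  refine NListPerm.inductionOn h .nil ?_ ?_ ?_
  · intro _ _ _ _ e _ ih; exact (e.flatT_congr).append ih
  · intro x x' y y' t t' e1 e2 p ih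
    refine .trans (.ofPerm ?_) (((e2.flatT_congr).append ((e1.flatT_congr).append ih)))
    simp only [List.flatMap_cons]
    exact List.perm_append_comm_assoc _ _ _
  · intro _ _ _ _ _ ih1 ih2; exact .trans ih1 ih2

theorem nplus_perm {l l' : List (Nest α)} (h : NListPerm l l') :
    NestEq (nplus l) (nplus l') := by
  rw [nplus_def, nplus_def]; exact mkP_perm h.flatMapP

theorem ntimes_perm {l l' : List (Nest α)} (h : NListPerm l l') :
    NestEq (ntimes l) (ntimes l') := by
  rw [ntimes_def, ntimes_def]; exact mkT_perm h.flatMapT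

theorem NCtx.fill_congr (C : NCtx α) {x y : Nest α} (e : NestEq x y) :
    NestEq (C.fill x) (C.fill y) := by
  induction C with
  | hole => exact e
  | plus l C ih => exact nplus_perm (.cons ih (NListPerm.refl l))
  | times l C ih => exact ntimes_perm (.cons ih (NListPerm.refl l))

end Infra

section Infra2
variable {α β : Type}

theorem Nest.flatP_of_notPlusRoot {x : Nest α} (h : x.notPlusRoot) : x.flatP = [x] := by
  cases x <;> first | rfl | exact absurd h (by exact id)

theorem Nest.flatT_of_notTimesRoot {x : Nest α} (h : x.notTimesRoot) : x.flatT = [x] := by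
  cases x <;> first | rfl | exact absurd h (by exact id)

theorem Nest.WF.flatP {x : Nest α} (h : x.WF) :
    ∀ y ∈ x.flatP, y.WF ∧ y.notPlusRoot := by
  cases h with
  | frm a => intro y hy; simp [Nest.flatP] at hy; subst hy; exact ⟨.frm a, trivial⟩
  | plus hl h1 h2 => intro y hy; exact ⟨h1 y hy, h2 y hy⟩
  | times hl h1 h2 =>
      intro y hy; simp [Nest.flatP] at hy; subst hy
      exact ⟨.times hl h1 h2, trivial⟩

theorem Nest.WF.flatT {x : Nest α} (h : x.WF) :
    ∀ y ∈ x.flatT, y.WF ∧ y.notTimesRoot := by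
  cases h with
  | frm a => intro y hy; simp [Nest.flatT] at hy; subst hy; exact ⟨.frm a, trivial⟩
  | times hl h1 h2 => intro y hy; exact ⟨h1 y hy, h2 y hy⟩
  | plus hl h1 h2 =>
      intro y hy; simp [Nest.flatT] at hy; subst hy
      exact ⟨.plus hl h1 h2, trivial⟩

theorem mkP_WF {l : List (Nest α)} (h1 : ∀ x ∈ l, x.WF) (h2 : ∀ x ∈ l, x.notPlusRoot) :
    (mkP l).WF := by
  match l with
  | [] => exact .plus (by simp) (by simp) (by simp)
  | [x] => exact h1 x (by simp)
  | a :: b :: t => exact .plus (by simp) h1 h2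

theorem mkT_WF {l : List (Nest α)} (h1 : ∀ x ∈ l, x.WF) (h2 : ∀ x ∈ l, x.notTimesRoot) :
    (mkT l).WF := by
  match l with
  | [] => exact .times (by simp) (by simp) (by simp)
  | [x] => exact h1 x (by simp)
  | a :: b :: t => exact .times (by simp) h1 h2

theorem nplus_WF {l : List (Nest α)} (h : ∀ x ∈ l, x.WF) : (nplus l).WF := by
  rw [nplus_def]
  refine mkP_WF ?_ ?_ <;>
    · intro y hy
      rw [List.mem_flatMap] at hy
      obtain ⟨x, hx, hy⟩ := hy
      first | exact ((h x hx).flatP y hy).1 | exact ((h x hx).flatP y hy).2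

theorem ntimes_WF {l : List (Nest α)} (h : ∀ x ∈ l, x.WF) : (ntimes l).WF := by
  rw [ntimes_def]
  refine mkT_WF ?_ ?_ <;>
    · intro y hy
      rw [List.mem_flatMap] at hy
      obtain ⟨x, hx, hy⟩ := hy
      first | exact ((h x hx).flatT y hy).1 | exact ((h x hx).flatT y hy).2

theorem mkP_flatP {x : Nest α} (h : x.WF) : mkP x.flatP = x := by
  cases h with
  | frm a => rfl
  | times hl h1 h2 => rfl
  | plus hl h1 h2 =>
      rename_i l
      match l, hl with
      | [], _ => rfl
      | a :: b :: t, _ => rfl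

theorem mkT_flatT {x : Nest α} (h : x.WF) : mkT x.flatT = x := by
  cases h with
  | frm a => rfl
  | plus hl h1 h2 => rfl
  | times hl h1 h2 =>
      rename_i l
      match l, hl with
      | [], _ => rfl
      | a :: b :: t, _ => rfl

theorem nplus_single {x : Nest α} (h : x.WF) : nplus [x] = x := by
  rw [nplus_def]; simpa using mkP_flatP h

theorem ntimes_single {x : Nest α} (h : x.WF) : ntimes [x] = x := by
  rw [ntimes_def]; simpa using mkT_flatT h

theorem Nest.All.flatP {p : α → Prop} {x : Nest α} (h : x.All p) :
    ∀ y ∈ x.flatP, y.All p := by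
  cases h with
  | frm ha => intro y hy; simp [Nest.flatP] at hy; subst hy; exact .frm ha
  | plus h1 => exact h1
  | times h1 =>
      intro y hy; simp [Nest.flatP] at hy; subst hy; exact .times h1

theorem Nest.All.flatT {p : α → Prop} {x : Nest α} (h : x.All p) :
    ∀ y ∈ x.flatT, y.All p := by
  cases h with
  | frm ha => intro y hy; simp [Nest.flatT] at hy; subst hy; exact .frm ha
  | times h1 => exact h1
  | plus h1 =>
      intro y hy; simp [Nest.flatT] at hy; subst hy; exact .plus h1

theorem nplus_All {p : α → Prop} {l : List (Nest α)} (h : ∀ x ∈ l, x.All p) :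
    (nplus l).All p := by
  rw [nplus_def]
  have h' : ∀ y ∈ l.flatMap Nest.flatP, y.All p := by
    intro y hy; rw [List.mem_flatMap] at hy
    obtain ⟨x, hx, hy⟩ := hy; exact (h x hx).flatP y hy
  match l.flatMap Nest.flatP, h' with
  | [], _ => exact .plus (by simp)
  | [x], h' => exact h' x (by simp)
  | a :: b :: t, h' => exact .plus h'

theorem ntimes_All {p : α → Prop} {l : List (Nest α)} (h : ∀ x ∈ l, x.All p) :
    (ntimes l).All p := by
  rw [ntimes_def]
  have h' : ∀ y ∈ l.flatMap Nest.flatT, y.All p := by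
    intro y hy; rw [List.mem_flatMap] at hy
    obtain ⟨x, hx, hy⟩ := hy; exact (h x hx).flatT y hy
  match l.flatMap Nest.flatT, h' with
  | [], _ => exact .times (by simp)
  | [x], h' => exact h' x (by simp)
  | a :: b :: t, h' => exact .times h'

/-- Composition of nested contexts. -/
def NCtx.comp : NCtx α → NCtx α → NCtx α
  | .hole, D => D
  | .plus l C, D => .plus l (C.comp D)
  | .times l C, D => .times l (C.comp D)

theorem NCtx.fill_comp (C D : NCtx α) (x : Nest α) :
    (C.comp D).fill x = C.fill (D.fill x) := by
  induction C with
  | hole => rfl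
  | plus l C ih => simp [NCtx.comp, NCtx.fill, ih]
  | times l C ih => simp [NCtx.comp, NCtx.fill, ih]

/- map lemmas -/

theorem Nest.mapList_eq (f : α → β) (l : List (Nest α)) :
    Nest.mapList f l = l.map (Nest.map f) := by
  induction l with
  | nil => rfl
  | cons x xs ih => simp [Nest.mapList, ih]

theorem Nest.map_flatP (f : α → β) (x : Nest α) :
    (Nest.map f x).flatP = x.flatP.map (Nest.map f) := by
  cases x <;> simp [Nest.map, Nest.flatP, Nest.mapList_eq]

theorem Nest.map_flatT (f : α → β) (x : Nest α) :
    (Nest.map f x).flatT = x.flatT.map (Nest.map f) := by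
  cases x <;> simp [Nest.map, Nest.flatT, Nest.mapList_eq]

theorem Nest.map_mkP (f : α → β) (l : List (Nest α)) :
    Nest.map f (mkP l) = mkP (l.map (Nest.map f)) := by
  match l with
  | [] => simp [mkP, Nest.map, Nest.mapList_eq]
  | [x] => rfl
  | a :: b :: t => simp [mkP, Nest.map, Nest.mapList_eq]

theorem Nest.map_mkT (f : α → β) (l : List (Nest α)) :
    Nest.map f (mkT l) = mkT (l.map (Nest.map f)) := by
  match l with
  | [] => simp [mkT, Nest.map, Nest.mapList_eq]
  | [x] => rfl
  | a :: b :: t => simp [mkT, Nest.map, Nest.mapList_eq]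

theorem Nest.map_nplus (f : α → β) (l : List (Nest α)) :
    Nest.map f (nplus l) = nplus (l.map (Nest.map f)) := by
  rw [nplus_def, nplus_def, Nest.map_mkP]
  congr 1
  rw [List.flatMap_map]
  induction l with
  | nil => rfl
  | cons x xs ih => simp [List.flatMap_cons, ih, Nest.map_flatP]

theorem Nest.map_ntimes (f : α → β) (l : List (Nest α)) :
    Nest.map f (ntimes l) = ntimes (l.map (Nest.map f)) := by
  rw [ntimes_def, ntimes_def, Nest.map_mkT]
  congr 1
  rw [List.flatMap_map]
  induction l with
  | nil => rfl
  | cons x xs ih => simp [List.flatMap_cons, ih, Nest.map_flatT]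

/-- Leafwise map of contexts. -/
def NCtx.map (f : α → β) : NCtx α → NCtx β
  | .hole => .hole
  | .plus l C => .plus (l.map (Nest.map f)) (C.map f)
  | .times l C => .times (l.map (Nest.map f)) (C.map f)

theorem Nest.map_fill (f : α → β) (C : NCtx α) (x : Nest α) :
    Nest.map f (C.fill x) = (C.map f).fill (Nest.map f x) := by
  induction C with
  | hole => rfl
  | plus l C ih => simp [NCtx.fill, NCtx.map, Nest.map_nplus, ih]
  | times l C ih => simp [NCtx.fill, NCtx.map, Nest.map_ntimes, ih]

theorem Nest.map_map (f : α → β) (g : β → γ) (x : Nest α) :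
    Nest.map g (Nest.map f x) = Nest.map (fun a => g (f a)) x := by
  induction x using Nest.rec
    (motive_2 := fun l => Nest.mapList g (Nest.mapList f l) =
      Nest.mapList (fun a => g (f a)) l) with
  | frm a => rfl
  | plus l ih => simp [Nest.map, ih]
  | times l ih => simp [Nest.map, ih]
  | nil => rfl
  | cons x xs ih1 ih2 => simp [Nest.mapList, ih1, ih2]

theorem NestEq.map {f : α → β} {x y : Nest α} (h : NestEq x y) :
    NestEq (Nest.map f x) (Nest.map f y) :=
  NestEq.rec (motive_1 := fun a b _ => NestEq (Nest.map f a) (Nest.map f b))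
    (motive_2 := fun l l' _ => NListPerm (l.map (Nest.map f)) (l'.map (Nest.map f)))
    (fun a => .frm (f a))
    (fun _ ih => by simpa [Nest.map, Nest.mapList_eq] using NestEq.plus ih)
    (fun _ ih => by simpa [Nest.map, Nest.mapList_eq] using NestEq.times ih)
    (.nil)
    (fun _ _ ih1 ih2 => .cons ih1 ih2)
    (fun _ _ _ ih1 ih2 ih3 => .swap ih1 ih2 ih3)
    (fun _ _ ih1 ih2 => .trans ih1 ih2)
    h

theorem Nest.map_notPlusRoot {f : α → β} {x : Nest α} (h : x.notPlusRoot) :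
    (Nest.map f x).notPlusRoot := by
  cases x <;> simp_all [Nest.map, Nest.notPlusRoot]

theorem Nest.map_notTimesRoot {f : α → β} {x : Nest α} (h : x.notTimesRoot) :
    (Nest.map f x).notTimesRoot := by
  cases x <;> simp_all [Nest.map, Nest.notTimesRoot]

theorem Nest.WF.map {f : α → β} {x : Nest α} (h : x.WF) : (Nest.map f x).WF := by
  induction x using Nest.rec
    (motive_2 := fun l => (∀ y ∈ l, y.WF) → ∀ y ∈ l.map (Nest.map f), y.WF) with
  | frm a => exact .frm _
  | plus l ih =>
      cases h with
      | plus hl h1 h2 =>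
          rw [Nest.map, Nest.mapList_eq]
          refine .plus (by simpa using hl) (ih h1) ?_
          intro y hy
          simp at hy; obtain ⟨x, hx, rfl⟩ := hy
          exact Nest.map_notPlusRoot (h2 x hx)
  | times l ih =>
      cases h with
      | times hl h1 h2 =>
          rw [Nest.map, Nest.mapList_eq]
          refine .times (by simpa using hl) (ih h1) ?_
          intro y hy
          simp at hy; obtain ⟨x, hx, rfl⟩ := hy
          exact Nest.map_notTimesRoot (h2 x hx)
  | nil =>
      rename_i h y hy; simp at hy
  | cons x xs ih1 ih2 =>
      rename_i hw y hy
      simp at hy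
      rcases hy with hy | ⟨z, hz, rfl⟩
      · subst hy; exact ih1 (hw x (by simp))
      · exact ih2 (fun y h => hw y (by simp [h])) _ (by simp; exact ⟨z, hz, rfl⟩)

end Infra2

section Norm
variable {α β : Type}

mutual
/-- Full normalization of a nest. -/
def Nest.norm : Nest α → Nest α
  | .frm a => .frm a
  | .plus l => nplus (Nest.normList l)
  | .times l => ntimes (Nest.normList l)
def Nest.normList : List (Nest α) → List (Nest α)
  | [] => []
  | x :: xs => x.norm :: Nest.normList xs
end

theorem Nest.normList_eq (l : List (Nest α)) : Nest.normList l = l.map Nest.norm := by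
  induction l with
  | nil => rfl
  | cons x xs ih => simp [Nest.normList, ih]

theorem Nest.norm_WF (x : Nest α) : (Nest.norm x).WF := by
  induction x using Nest.rec (motive_2 := fun l => ∀ y ∈ l, (Nest.norm y).WF) with
  | frm a => exact .frm a
  | plus l ih => rw [Nest.norm, Nest.normList_eq]; exact nplus_WF (by simpa using ih)
  | times l ih => rw [Nest.norm, Nest.normList_eq]; exact ntimes_WF (by simpa using ih)
  | nil => rename_i y hy; cases hy
  | cons x xs ih1 ih2 =>
      rename_i y hy
      rcases List.mem_cons.mp hy with rfl | hy'
      · exact ih1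
      · exact ih2 y hy'

theorem flatP_mkP_of_pieces {K : List (Nest α)} (h : ∀ z ∈ K, z.notPlusRoot) :
    (mkP K).flatP = K := by
  match K with
  | [] => rfl
  | [z] => exact Nest.flatP_of_notPlusRoot (h z (by simp))
  | a :: b :: t => rfl

theorem flatT_mkT_of_pieces {K : List (Nest α)} (h : ∀ z ∈ K, z.notTimesRoot) :
    (mkT K).flatT = K := by
  match K with
  | [] => rfl
  | [z] => exact Nest.flatT_of_notTimesRoot (h z (by simp))
  | a :: b :: t => rfl

theorem flatP_nplus_of_WF {m : List (Nest α)} (h : ∀ y ∈ m, y.WF) :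
    (nplus m).flatP = m.flatMap Nest.flatP := by
  rw [nplus_def]
  refine flatP_mkP_of_pieces ?_
  intro z hz
  rw [List.mem_flatMap] at hz
  obtain ⟨x, hx, hz⟩ := hz
  exact ((h x hx).flatP z hz).2

theorem flatT_ntimes_of_WF {m : List (Nest α)} (h : ∀ y ∈ m, y.WF) :
    (ntimes m).flatT = m.flatMap Nest.flatT := by
  rw [ntimes_def]
  refine flatT_mkT_of_pieces ?_
  intro z hz
  rw [List.mem_flatMap] at hz
  obtain ⟨x, hx, hz⟩ := hz
  exact ((h x hx).flatT z hz).2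

theorem Nest.flatP_norm (x : Nest α) :
    (Nest.norm x).flatP = x.flatP.flatMap (fun y => (Nest.norm y).flatP) := by
  cases x with
  | frm a => simp [Nest.norm, Nest.flatP]
  | times l => simp [Nest.flatP]
  | plus l =>
      rw [Nest.norm, Nest.normList_eq, Nest.flatP,
        flatP_nplus_of_WF (by
          intro y hy
          simp at hy
          obtain ⟨z, _, rfl⟩ := hy
          exact Nest.norm_WF z), List.flatMap_map]

theorem Nest.flatT_norm (x : Nest α) :
    (Nest.norm x).flatT = x.flatT.flatMap (fun y => (Nest.norm y).flatT) := by
  cases x with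
  | frm a => simp [Nest.norm, Nest.flatT]
  | plus l => simp [Nest.flatT]
  | times l =>
      rw [Nest.norm, Nest.normList_eq, Nest.flatT,
        flatT_ntimes_of_WF (by
          intro y hy
          simp at hy
          obtain ⟨z, _, rfl⟩ := hy
          exact Nest.norm_WF z), List.flatMap_map]

theorem flatMap_np (l : List (Nest α)) :
    (l.flatMap Nest.flatP).flatMap (fun y => (Nest.norm y).flatP)
      = l.flatMap (fun y => (Nest.norm y).flatP) := by
  rw [List.flatMap_assoc]
  congr 1
  funext y
  exact (Nest.flatP_norm y).symm

theorem flatMap_nt (l : List (Nest α)) :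
    (l.flatMap Nest.flatT).flatMap (fun y => (Nest.norm y).flatT)
      = l.flatMap (fun y => (Nest.norm y).flatT) := by
  rw [List.flatMap_assoc]
  congr 1
  funext y
  exact (Nest.flatT_norm y).symm

theorem Nest.norm_nplus (l : List (Nest α)) :
    Nest.norm (nplus l) = nplus (l.map Nest.norm) := by
  have hrhs : nplus (l.map Nest.norm) = mkP (l.flatMap (fun y => (Nest.norm y).flatP)) := by
    rw [nplus_def, List.flatMap_map]
  rw [nplus_def, hrhs]
  rcases hK : l.flatMap Nest.flatP with _ | ⟨a, K'⟩
  · have : l.flatMap (fun y => (Nest.norm y).flatP) = [] := by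
      rw [← flatMap_np, hK]; rfl
    rw [this]; rfl
  · rcases K' with _ | ⟨b, t⟩
    · -- singleton [a]
      have : l.flatMap (fun y => (Nest.norm y).flatP) = (Nest.norm a).flatP := by
        rw [← flatMap_np, hK]; simp
      rw [this, mkP]
      exact (mkP_flatP (Nest.norm_WF a)).symm ▸ rfl
    · -- two or more
      have h2 : l.flatMap (fun y => (Nest.norm y).flatP)
          = ((a :: b :: t).flatMap (fun y => (Nest.norm y).flatP)) := by
        rw [← flatMap_np, hK]
      rw [h2]
      show nplus (Nest.normList (a :: b :: t)) = _
      rw [Nest.normList_eq, nplus_def, List.flatMap_map]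

theorem Nest.norm_ntimes (l : List (Nest α)) :
    Nest.norm (ntimes l) = ntimes (l.map Nest.norm) := by
  have hrhs : ntimes (l.map Nest.norm) = mkT (l.flatMap (fun y => (Nest.norm y).flatT)) := by
    rw [ntimes_def, List.flatMap_map]
  rw [ntimes_def, hrhs]
  rcases hK : l.flatMap Nest.flatT with _ | ⟨a, K'⟩
  · have : l.flatMap (fun y => (Nest.norm y).flatT) = [] := by
      rw [← flatMap_nt, hK]; rfl
    rw [this]; rfl
  · rcases K' with _ | ⟨b, t⟩
    · have : l.flatMap (fun y => (Nest.norm y).flatT) = (Nest.norm a).flatT := by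
        rw [← flatMap_nt, hK]; simp
      rw [this, mkT]
      exact (mkT_flatT (Nest.norm_WF a)).symm ▸ rfl
    · have h2 : l.flatMap (fun y => (Nest.norm y).flatT)
          = ((a :: b :: t).flatMap (fun y => (Nest.norm y).flatT)) := by
        rw [← flatMap_nt, hK]
      rw [h2]
      show ntimes (Nest.normList (a :: b :: t)) = _
      rw [Nest.normList_eq, ntimes_def, List.flatMap_map]

/-- Normalization of contexts. -/
def NCtx.normC : NCtx α → NCtx α
  | .hole => .hole
  | .plus l C => .plus (l.map Nest.norm) C.normC
  | .times l C => .times (l.map Nest.norm) C.normC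

theorem Nest.norm_fill (C : NCtx α) (x : Nest α) :
    Nest.norm (C.fill x) = C.normC.fill (Nest.norm x) := by
  induction C with
  | hole => rfl
  | plus l C ih => simp [NCtx.fill, NCtx.normC, Nest.norm_nplus, ih]
  | times l C ih => simp [NCtx.fill, NCtx.normC, Nest.norm_ntimes, ih]

theorem flatMap_flatP_of_notPlusRoot {l : List (Nest α)} (h : ∀ x ∈ l, x.notPlusRoot) :
    l.flatMap Nest.flatP = l := by
  induction l with
  | nil => rfl
  | cons x xs ih =>
      simp only [List.flatMap_cons]
      rw [Nest.flatP_of_notPlusRoot (h x (by simp)), ih (fun y hy => h y (by simp [hy]))]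
      rfl

theorem flatMap_flatT_of_notTimesRoot {l : List (Nest α)} (h : ∀ x ∈ l, x.notTimesRoot) :
    l.flatMap Nest.flatT = l := by
  induction l with
  | nil => rfl
  | cons x xs ih =>
      simp only [List.flatMap_cons]
      rw [Nest.flatT_of_notTimesRoot (h x (by simp)), ih (fun y hy => h y (by simp [hy]))]
      rfl

theorem nplus_of_normal {l : List (Nest α)} (hl : l.length ≠ 1)
    (h : ∀ x ∈ l, x.notPlusRoot) : nplus l = .plus l := by
  rw [nplus_def, flatMap_flatP_of_notPlusRoot h]
  match l, hl with
  | [], _ => rfl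
  | a :: b :: t, _ => rfl

theorem ntimes_of_normal {l : List (Nest α)} (hl : l.length ≠ 1)
    (h : ∀ x ∈ l, x.notTimesRoot) : ntimes l = .times l := by
  rw [ntimes_def, flatMap_flatT_of_notTimesRoot h]
  match l, hl with
  | [], _ => rfl
  | a :: b :: t, _ => rfl

theorem nplus_of_WF_plus {l : List (Nest α)} (h : (Nest.plus l).WF) :
    nplus l = .plus l := by
  cases h with
  | plus hl h1 h2 => exact nplus_of_normal hl h2

theorem ntimes_of_WF_times {l : List (Nest α)} (h : (Nest.times l).WF) :
    ntimes l = .times l := by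
  cases h with
  | times hl h1 h2 => exact ntimes_of_normal hl h2

theorem Nest.norm_of_WF {x : Nest α} (h : x.WF) : Nest.norm x = x := by
  induction x using Nest.rec (motive_2 := fun l => (∀ y ∈ l, y.WF) → l.map Nest.norm = l) with
  | frm a => rfl
  | plus l ih =>
      cases h with
      | plus hl h1 h2 =>
          rw [Nest.norm, Nest.normList_eq, ih h1]
          exact nplus_of_WF_plus (.plus hl h1 h2)
  | times l ih =>
      cases h with
      | times hl h1 h2 =>
          rw [Nest.norm, Nest.normList_eq, ih h1]
          exact ntimes_of_WF_times (.times hl h1 h2)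
  | nil => rename_i hw; rfl
  | cons x xs ih1 ih2 =>
      rename_i hw
      simp only [List.map_cons]
      rw [ih1 (hw x (by simp)), ih2 (fun y hy => hw y (by simp [hy]))]

theorem NestEq.norm {x y : Nest α} (h : NestEq x y) :
    NestEq (Nest.norm x) (Nest.norm y) :=
  NestEq.rec (motive_1 := fun a b _ => NestEq (Nest.norm a) (Nest.norm b))
    (motive_2 := fun l l' _ => NListPerm (l.map Nest.norm) (l'.map Nest.norm))
    (fun a => .frm a)
    (fun _ ih => by
      simp only [Nest.norm, Nest.normList_eq]
      exact nplus_perm ih)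
    (fun _ ih => by
      simp only [Nest.norm, Nest.normList_eq]
      exact ntimes_perm ih)
    (.nil)
    (fun _ _ ih1 ih2 => .cons ih1 ih2)
    (fun _ _ _ ih1 ih2 ih3 => .swap ih1 ih2 ih3)
    (fun _ _ ih1 ih2 => .trans ih1 ih2)
    h

theorem Nest.All.norm {p : α → Prop} {x : Nest α} (h : x.All p) :
    (Nest.norm x).All p := by
  induction x using Nest.rec
      (motive_2 := fun l => (∀ y ∈ l, y.All p) → ∀ y ∈ l.map Nest.norm, y.All p) with
  | frm a => cases h with | frm ha => exact .frm ha
  | plus l ih =>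
      cases h with
      | plus h1 => rw [Nest.norm, Nest.normList_eq]; exact nplus_All (ih h1)
  | times l ih =>
      cases h with
      | times h1 => rw [Nest.norm, Nest.normList_eq]; exact ntimes_All (ih h1)
  | nil => rename_i h' y hy; simp at hy
  | cons x xs ih1 ih2 =>
      rename_i hw y hy
      simp at hy
      rcases hy with hy | ⟨z, hz, rfl⟩
      · subst hy; exact ih1 (hw x (by simp))
      · exact ih2 (fun y h => hw y (by simp [h])) _ (by simp; exact ⟨z, hz, rfl⟩)

end Norm

section Derived

/-- Focus on the right via a `↓↑` cut. -/
theorem FBI.rfocOf {Γ : Nest Leaf} {P : PForm} (h : FBI true (.unf Γ (.shiftU P))) :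
    FBI true (.rfoc Γ P) :=
  .cutPR .hole (.downR h) (.ruleP P)

/-- Full weakening: an empty additive multiset may be replaced by anything. -/
theorem FBI.weaken (C : NCtx Leaf) (Δ : Nest Leaf) {N : NForm}
    (h : FBI true (.unf (C.fill (.plus [])) N)) : FBI true (.unf (C.fill Δ) N) :=
  .cutP C (.topPR Δ) (.topPL C h)

theorem FBI.shiftIn (C : NCtx Leaf) {P : PForm} {M : NForm}
    (h : FBI true (.unf (C.fill (pf P)) M)) :
    FBI true (.unf (C.fill (pf (.shiftD (.shiftU P)))) M) :=
  .cutP C (.ruleP P) h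

theorem swapP {a b : Nest Leaf} : NestEq (nplus [a, b]) (nplus [b, a]) :=
  nplus_perm (.ofPerm (List.Perm.swap b a []))

theorem swapT {a b : Nest Leaf} : NestEq (ntimes [a, b]) (ntimes [b, a]) :=
  ntimes_perm (.ofPerm (List.Perm.swap b a []))

theorem neutral_two {Γ₁ Γ₂ : Nest Leaf} (h1 : NeutralNest Γ₁) (h2 : NeutralNest Γ₂) :
    ∀ x ∈ [Γ₁, Γ₂], x.All Leaf.IsNeutral := by
  intro x hx
  simp at hx
  rcases hx with rfl | rfl
  · exact h1
  · exact h2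

theorem wf_two {Γ₁ Γ₂ : Nest Leaf} (h1 : Γ₁.WF) (h2 : Γ₂.WF) :
    ∀ x ∈ [Γ₁, Γ₂], Nest.WF x := by
  intro x hx
  simp at hx
  rcases hx with rfl | rfl
  · exact h1
  · exact h2

mutual

/-- Generalized positive identity expansion: decompose a positive formula in
context into neutral pieces. -/
theorem Gpos : ∀ (P : PForm) (C : NCtx Leaf) (N : NForm),
    (∀ Γ, NeutralNest Γ → Γ.WF → FBI true (.rfoc Γ P) → FBI true (.unf (C.fill Γ) N)) →
    FBI true (.unf (C.fill (pf P)) N)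
  | .atom a, C, N, k =>
      k (pf (.atom a)) (.frm trivial) (.frm _) (.axP a [] (by intro Λ h; cases h))
  | .shiftD M, C, N, k =>
      k (pf (.shiftD M)) (.frm trivial) (.frm _)
        (.downR (Gneg M (pf (.shiftD M)) (fun C' R hR h => .downL C' hR h)))
  | .or P Q, C, N, k =>
      .orL C (Gpos P C N fun Γ hn hw hr => k Γ hn hw (.orR1 hr))
        (Gpos Q C N fun Γ hn hw hr => k Γ hn hw (.orR2 hr))
  | .and P Q, C, N, k => by
      refine .andPL C ?_
      have h1 := Gpos P (C.comp (.plus [pf Q] .hole)) N (fun Γ₁ hn1 hw1 hr1 => by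
        rw [NCtx.fill_comp]
        have h2 := Gpos Q (C.comp (.plus [Γ₁] .hole)) N (fun Γ₂ hn2 hw2 hr2 => by
          rw [NCtx.fill_comp]
          have h3 := k (nplus [Γ₁, Γ₂]) (nplus_All (neutral_two hn1 hn2))
            (nplus_WF (wf_two hw1 hw2)) (.andPR hr1 hr2)
          exact .exchU h3 (C.fill_congr swapP))
        rw [NCtx.fill_comp] at h2
        exact .exchU h2 (C.fill_congr swapP))
      rw [NCtx.fill_comp] at h1
      exact h1
  | .star P Q, C, N, k => by
      refine .starL C ?_
      have h1 := Gpos P (C.comp (.times [pf Q] .hole)) N (fun Γ₁ hn1 hw1 hr1 => by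
        rw [NCtx.fill_comp]
        have h2 := Gpos Q (C.comp (.times [Γ₁] .hole)) N (fun Γ₂ hn2 hw2 hr2 => by
          rw [NCtx.fill_comp]
          have hwt : (ntimes [Γ₁, Γ₂]).WF := ntimes_WF (wf_two hw1 hw2)
          have hrr : FBI true (.rfoc (ntimes [Γ₁, Γ₂]) (.star P Q)) := by
            have := FBI.starR (b := true) [] hr1 hr2
            rwa [nplus_single hwt] at this
          have h3 := k (ntimes [Γ₁, Γ₂]) (ntimes_All (neutral_two hn1 hn2)) hwt hrr
          exact .exchU h3 (C.fill_congr swapT))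
        rw [NCtx.fill_comp] at h2
        exact .exchU h2 (C.fill_congr swapT))
      rw [NCtx.fill_comp] at h1
      exact h1
  | .top, C, N, k =>
      .topPL C (k (.plus []) (.plus (by simp)) (.plus (by simp) (by simp) (by simp))
        (.topPR _))
  | .unit, C, N, k =>
      .unitL C (k (.times []) (.times (by simp)) (.times (by simp) (by simp) (by simp))
        (.unitR []))
  | .bot, C, N, k => .botL C N

/-- Generalized negative identity expansion. -/
theorem Gneg : ∀ (N : NForm) (Γ : Nest Leaf),
    (∀ (C : NCtx Leaf) (R : NForm), R.Neutral → FBI true (.lfoc (C.fill (nf N)) R) →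
      FBI true (.unf (C.fill Γ) R)) →
    FBI true (.unf Γ N)
  | .atom a, Γ, k => k .hole (.atom a) trivial (.axN a)
  | .shiftU P, Γ, k =>
      k .hole (.shiftU P) trivial
        (.upL .hole (Gpos P .hole (.shiftU P) (fun Γ' hn _ hr => .upR hn hr)))
  | .and N M, Γ, k =>
      .andNR (Gneg N Γ fun C R hR h => k C R hR (.andNL1 C h))
        (Gneg M Γ fun C R hR h => k C R hR (.andNL2 C h))
  | .imp P N1, Γ, k => by
      refine .impR (Gneg N1 (nplus [Γ, pf P]) (fun C R hR h => ?_))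
      have h1 := Gpos P (C.comp (.plus [Γ] .hole)) R (fun Γ' hn hw hr => by
        rw [NCtx.fill_comp]
        have st : FBI true (.lfoc (C.fill (nplus [nf (.imp P N1), Γ'])) R) :=
          .exchL (.impL C hr h) (C.fill_congr swapP)
        have st2 : FBI true (.lfoc ((C.comp (.plus [Γ'] .hole)).fill (nf (.imp P N1))) R) := by
          rw [NCtx.fill_comp]; exact st
        have h3 := k (C.comp (.plus [Γ'] .hole)) R hR st2
        rw [NCtx.fill_comp] at h3
        exact .exchU h3 (C.fill_congr swapP))
      rw [NCtx.fill_comp] at h1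
      exact .exchU h1 (C.fill_congr swapP)
  | .wand P N1, Γ, k => by
      refine .wandR (Gneg N1 (ntimes [Γ, pf P]) (fun C R hR h => ?_))
      have h1 := Gpos P (C.comp (.times [Γ] .hole)) R (fun Γ' hn hw hr => by
        rw [NCtx.fill_comp]
        have w : FBI true
            (.lfoc (C.fill (ntimes [Γ', Nest.times [], nplus [Nest.plus [], nf (.wand P N1)]])) R) :=
          .wandL C hr h
        have w2 : FBI true (.lfoc (C.fill (ntimes [Γ', nf (.wand P N1)])) R) := w
        have st : FBI true (.lfoc (C.fill (ntimes [nf (.wand P N1), Γ'])) R) :=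
          .exchL w2 (C.fill_congr swapT)
        have st2 : FBI true (.lfoc ((C.comp (.times [Γ'] .hole)).fill (nf (.wand P N1))) R) := by
          rw [NCtx.fill_comp]; exact st
        have h3 := k (C.comp (.times [Γ'] .hole)) R hR st2
        rw [NCtx.fill_comp] at h3
        exact .exchU h3 (C.fill_congr swapT))
      rw [NCtx.fill_comp] at h1
      exact .exchU h1 (C.fill_congr swapT)
  | .top, Γ, k => .topNR Γ

end

/-- Identity expansion, positive. -/
theorem IdPos (P : PForm) : FBI true (.unf (pf P) (.shiftU P)) :=
  Gpos P .hole (.shiftU P) (fun Γ hn _ hr => .upR hn hr)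

/-- Identity expansion, negative. -/
theorem IdNeg (N : NForm) : FBI true (.unf (pf (.shiftD N)) N) :=
  Gneg N (pf (.shiftD N)) (fun C R hR h => .downL C hR h)

/-- Unfocusing via a cut with identity. -/
theorem FBI.unfOf {Γ : Nest Leaf} {P : PForm} (h : FBI true (.rfoc Γ P)) :
    FBI true (.unf Γ (.shiftU P)) :=
  .cutP .hole h (IdPos P)

end Derived

section Repolarise

/-- `↓(P→N), P ⊢ N` -/
theorem IdAppImp (P : PForm) (N : NForm) :
    FBI true (.unf (nplus [pf (.shiftD (.imp P N)), pf P]) N) :=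
  Gneg N (nplus [pf (.shiftD (.imp P N)), pf P]) (fun C R hR h => by
    have h1 := Gpos P (C.comp (.plus [pf (.shiftD (.imp P N))] .hole)) R
      (fun Γ' hn hw hr => by
        rw [NCtx.fill_comp]
        have st : FBI true (.lfoc (C.fill (nplus [nf (.imp P N), Γ'])) R) :=
          .exchL (.impL C hr h) (C.fill_congr swapP)
        have st2 : FBI true
            (.lfoc ((C.comp (.plus [Γ'] .hole)).fill (nf (.imp P N))) R) := by
          rw [NCtx.fill_comp]; exact st
        have d := FBI.downL (C.comp (.plus [Γ'] .hole)) hR st2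
        rw [NCtx.fill_comp] at d
        exact .exchU d (C.fill_congr swapP))
    rw [NCtx.fill_comp] at h1
    exact .exchU h1 (C.fill_congr swapP))

/-- `↓(P−∗N), P ⊢ N` (multiplicatively) -/
theorem IdAppWand (P : PForm) (N : NForm) :
    FBI true (.unf (ntimes [pf (.shiftD (.wand P N)), pf P]) N) :=
  Gneg N (ntimes [pf (.shiftD (.wand P N)), pf P]) (fun C R hR h => by
    have h1 := Gpos P (C.comp (.times [pf (.shiftD (.wand P N))] .hole)) R
      (fun Γ' hn hw hr => by
        rw [NCtx.fill_comp]
        have w : FBI true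
            (.lfoc (C.fill (ntimes [Γ', Nest.times [],
              nplus [Nest.plus [], nf (.wand P N)]])) R) :=
          .wandL C hr h
        have w2 : FBI true (.lfoc (C.fill (ntimes [Γ', nf (.wand P N)])) R) := w
        have st : FBI true (.lfoc (C.fill (ntimes [nf (.wand P N), Γ'])) R) :=
          .exchL w2 (C.fill_congr swapT)
        have st2 : FBI true
            (.lfoc ((C.comp (.times [Γ'] .hole)).fill (nf (.wand P N))) R) := by
          rw [NCtx.fill_comp]; exact st
        have d := FBI.downL (C.comp (.times [Γ'] .hole)) hR st2
        rw [NCtx.fill_comp] at d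
        exact .exchU d (C.fill_congr swapT))
    rw [NCtx.fill_comp] at h1
    exact .exchU h1 (C.fill_congr swapT))

/-- The canonical polarisation of a formula. -/
def posF (pol : ℕ → Bool) : Formula → PForm
  | .atom a => if pol a then .atom a else .shiftD (.atom a)
  | .top => .top
  | .bot => .bot
  | .unit => .unit
  | .and φ ψ => .and (posF pol φ) (posF pol ψ)
  | .or φ ψ => .or (posF pol φ) (posF pol ψ)
  | .star φ ψ => .star (posF pol φ) (posF pol ψ)
  | .imp φ ψ => .shiftD (.imp (posF pol φ) (.shiftU (posF pol ψ)))
  | .wand φ ψ => .shiftD (.wand (posF pol φ) (.shiftU (posF pol ψ)))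

mutual

theorem L1p (pol : ℕ → Bool) : ∀ (P : PForm), P.WFpol pol →
    FBI true (.unf (pf P) (.shiftU (posF pol P.dep)))
  | .atom a, h => by
      have hh : pol a = true := h
      simp only [PForm.dep, posF, hh, if_true]
      exact IdPos (.atom a)
  | .shiftD N, h => L1n pol N h
  | .or P Q, h =>
      .orL .hole (.unfOf (.orR1 (.rfocOf (L1p pol P h.1))))
        (.unfOf (.orR2 (.rfocOf (L1p pol Q h.2))))
  | .star P Q, h =>
      .starL .hole (.unfOf (.starR [] (.rfocOf (L1p pol P h.1))
        (.rfocOf (L1p pol Q h.2))))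
  | .and P Q, h =>
      .andPL .hole (.unfOf (.andPR (.rfocOf (L1p pol P h.1))
        (.rfocOf (L1p pol Q h.2))))
  | .top, _ => .topPL .hole (.upR (.plus (by simp)) (.topPR _))
  | .unit, _ => .unitL .hole (.upR (.times (by simp)) (.unitR []))
  | .bot, _ => .botL .hole _

theorem L1n (pol : ℕ → Bool) : ∀ (N : NForm), N.WFpol pol →
    FBI true (.unf (pf (.shiftD N)) (.shiftU (posF pol N.dep)))
  | .atom a, h => by
      have hh : pol a = false := h
      simp only [NForm.dep, posF, hh, if_false, Bool.false_eq_true]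
      exact IdPos (.shiftD (.atom a))
  | .shiftU P, h => .downL .hole trivial (.upL .hole (L1p pol P h))
  | .and N M, h => by
      have proj1 : FBI true (.unf (pf (.shiftD (.and N M))) N) :=
        Gneg N (pf (.shiftD (.and N M))) (fun C R hR hh => .downL C hR (.andNL1 C hh))
      have proj2 : FBI true (.unf (pf (.shiftD (.and N M))) M) :=
        Gneg M (pf (.shiftD (.and N M))) (fun C R hR hh => .downL C hR (.andNL2 C hh))
      have c1 : FBI true (.unf (pf (.shiftD (.and N M))) (.shiftU (posF pol N.dep))) :=
        .cutN .hole proj1 (L1n pol N h.1)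
      have c2 : FBI true (.unf (pf (.shiftD (.and N M))) (.shiftU (posF pol M.dep))) :=
        .cutN .hole proj2 (L1n pol M h.2)
      refine .contr .hole (.upR ?_ (.andPR (.rfocOf c1) (.rfocOf c2)))
      exact nplus_All (neutral_two (.frm trivial) (.frm trivial))
  | .imp P N1, h => by
      refine .upR (.frm trivial) (.downR (.impR ?_))
      have step1 : FBI true (.unf (nplus [pf (.shiftD (.imp P N1)), pf P])
          (.shiftU (posF pol N1.dep))) :=
        .cutN .hole (IdAppImp P N1) (L1n pol N1 h.2)
      have step2 := FBI.exchU step1 swapP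
      have step3 := FBI.cutP (.plus [pf (.shiftD (.imp P N1))] .hole)
        (.rfocOf (L2p pol P h.1)) step2
      exact .exchU step3 swapP
  | .wand P N1, h => by
      refine .upR (.frm trivial) (.downR (.wandR ?_))
      have step1 : FBI true (.unf (ntimes [pf (.shiftD (.wand P N1)), pf P])
          (.shiftU (posF pol N1.dep))) :=
        .cutN .hole (IdAppWand P N1) (L1n pol N1 h.2)
      have step2 := FBI.exchU step1 swapT
      have step3 := FBI.cutP (.times [pf (.shiftD (.wand P N1))] .hole)
        (.rfocOf (L2p pol P h.1)) step2
      exact .exchU step3 swapT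
  | .top, _ => .upR (.frm trivial) (.topPR _)

theorem L2p (pol : ℕ → Bool) : ∀ (P : PForm), P.WFpol pol →
    FBI true (.unf (pf (posF pol P.dep)) (.shiftU P))
  | .atom a, h => by
      have hh : pol a = true := h
      simp only [PForm.dep, posF, hh, if_true]
      exact IdPos (.atom a)
  | .shiftD N, h => .unfOf (.downR (L2n pol N h))
  | .or P Q, h =>
      .orL .hole (.unfOf (.orR1 (.rfocOf (L2p pol P h.1))))
        (.unfOf (.orR2 (.rfocOf (L2p pol Q h.2))))
  | .star P Q, h =>
      .starL .hole (.unfOf (.starR [] (.rfocOf (L2p pol P h.1))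
        (.rfocOf (L2p pol Q h.2))))
  | .and P Q, h =>
      .andPL .hole (.unfOf (.andPR (.rfocOf (L2p pol P h.1))
        (.rfocOf (L2p pol Q h.2))))
  | .top, _ => IdPos .top
  | .unit, _ => IdPos .unit
  | .bot, _ => IdPos .bot

theorem L2n (pol : ℕ → Bool) : ∀ (N : NForm), N.WFpol pol →
    FBI true (.unf (pf (posF pol N.dep)) N)
  | .atom a, h => by
      have hh : pol a = false := h
      simp only [NForm.dep, posF, hh, if_false, Bool.false_eq_true]
      exact .downL .hole trivial (.axN a)
  | .shiftU P, h => L2p pol P h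
  | .and N M, h => by
      refine .andNR (.andPL .hole ?_) (.andPL .hole ?_)
      · have w := FBI.weaken (.plus [pf (posF pol N.dep)] .hole)
          (pf (posF pol M.dep)) (L2n pol N h.1)
        exact .exchU w swapP
      · exact FBI.weaken (.plus [pf (posF pol M.dep)] .hole)
          (pf (posF pol N.dep)) (L2n pol M h.2)
  | .imp P N1, h => by
      refine .impR ?_
      have app := IdAppImp (posF pol P.dep) (.shiftU (posF pol N1.dep))
      have conv1 := FBI.cutN .hole app (FBI.shiftIn .hole (L2n pol N1 h.2))
      have conv2 := FBI.exchU conv1 swapP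
      have fin := FBI.cutP
        (.plus [pf (.shiftD (.imp (posF pol P.dep) (.shiftU (posF pol N1.dep))))] .hole)
        (.rfocOf (L1p pol P h.1)) conv2
      exact .exchU fin swapP
  | .wand P N1, h => by
      refine .wandR ?_
      have app := IdAppWand (posF pol P.dep) (.shiftU (posF pol N1.dep))
      have conv1 := FBI.cutN .hole app (FBI.shiftIn .hole (L2n pol N1 h.2))
      have conv2 := FBI.exchU conv1 swapT
      have fin := FBI.cutP
        (.times [pf (.shiftD (.wand (posF pol P.dep) (.shiftU (posF pol N1.dep))))] .hole)
        (.rfocOf (L1p pol P h.1)) conv2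
      exact .exchU fin swapT
  | .top, _ => .topNR _

end

end Repolarise

section Simulation

variable (pol : ℕ → Bool)

/-- Canonical polarisation of leaves. -/
def cf : Formula → Leaf := fun φ => .pos (posF pol φ)

/-- Canonical (normalized) polarisation of nests of formulas. -/
def cN (Γ : Nest Formula) : Nest Leaf := (Nest.map (cf pol) Γ).norm

/-- Canonical polarisation of contexts. -/
def cC (C : NCtx Formula) : NCtx Leaf := (C.map (cf pol)).normC

theorem cN_fill (C : NCtx Formula) (X : Nest Formula) :
    cN pol (C.fill X) = (cC pol C).fill (cN pol X) := by
  rw [cN, Nest.map_fill, Nest.norm_fill]; rfl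

theorem cN_nplus (l : List (Nest Formula)) :
    cN pol (nplus l) = nplus (l.map (cN pol)) := by
  rw [cN, Nest.map_nplus, Nest.norm_nplus, List.map_map]; rfl

theorem cN_ntimes (l : List (Nest Formula)) :
    cN pol (ntimes l) = ntimes (l.map (cN pol)) := by
  rw [cN, Nest.map_ntimes, Nest.norm_ntimes, List.map_map]; rfl

theorem cN_WF (Γ : Nest Formula) : (cN pol Γ).WF := Nest.norm_WF _

theorem cN_frm (φ : Formula) : cN pol (.frm φ) = pf (posF pol φ) := rfl

theorem perm3 {a b c c' : Nest Leaf} (e : NestEq c c') :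
    NestEq (ntimes [a, b, c]) (ntimes [c', a, b]) := by
  refine ntimes_perm (NListPerm.trans (.ofPerm ?_) (.cons e (NListPerm.refl _)))
  exact (List.Perm.cons a (List.Perm.swap c b [])).trans (List.Perm.swap c a [b])

/-- Weakening in an extra additive list. -/
theorem FBI.weaken_head {Γ₀ : Nest Leaf} {N : NForm} (hw : Γ₀.WF)
    (h : FBI true (.unf Γ₀ N)) (l : List (Nest Leaf)) :
    FBI true (.unf (nplus (Γ₀ :: l)) N) := by
  have hpre : FBI true (.unf ((NCtx.plus [Γ₀] .hole).fill (.plus [])) N) := by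
    show FBI true (.unf (nplus [.plus [], Γ₀]) N)
    have e : nplus [(.plus [] : Nest Leaf), Γ₀] = nplus [Γ₀] := by
      rw [nplus_def, nplus_def]; rfl
    rw [e, nplus_single hw]
    exact h
  have w := FBI.weaken (.plus [Γ₀] .hole) (.plus (l.flatMap Nest.flatP)) hpre
  refine .exchU w ?_
  show NestEq (nplus [.plus (l.flatMap Nest.flatP), Γ₀]) (nplus (Γ₀ :: l))
  rw [nplus_def, nplus_def]
  apply mkP_perm
  apply NListPerm.ofPerm
  show ((l.flatMap Nest.flatP) ++ (Γ₀.flatP ++ [])).Perm (Γ₀.flatP ++ l.flatMap Nest.flatP)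
  rw [List.append_nil]
  exact List.perm_append_comm

theorem StepA {Γ₀ : Nest Formula} {φ : Formula} (h : NProof Γ₀ φ) :
    FBI true (.unf (cN pol Γ₀) (.shiftU (posF pol φ))) := by
  induction h with
  | ax φ => exact IdPos (posF pol φ)
  | axP a l =>
      rw [cN_nplus]
      simp only [List.map_cons]
      exact FBI.weaken_head (.frm _) (IdPos (posF pol (.atom a))) _
  | exch h e ih => exact .exchU ih ((NestEq.map e).norm)
  | contr C h ih =>
      rw [cN_fill]
      rw [cN_fill, cN_nplus] at ih
      simp only [List.map_cons, List.map_nil] at ih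
      exact .contr (cC pol C) ih
  | botL C φ =>
      rw [cN_fill]
      exact .botL (cC pol C) _
  | topR => exact .upR (.plus (by simp [Nest.mapList, Nest.normList])) (.topPR _)
  | topW Γ => exact .cutP .hole (.topPR _) (IdPos .top)
  | unitR => exact .upR (.times (by simp [Nest.mapList, Nest.normList])) (.unitR [])
  | unitW l =>
      rw [cN_nplus]
      simp only [List.map_cons]
      exact .unfOf (.unitR (l.map (cN pol)))
  | unitL C h ih =>
      rw [cN_fill]
      rw [cN_fill] at ih
      exact .unitL (cC pol C) ih
  | andL C h ih =>
      rw [cN_fill]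
      rw [cN_fill, cN_nplus] at ih
      simp only [List.map_cons, List.map_nil] at ih
      exact .andPL (cC pol C) ih
  | andR h1 h2 ih1 ih2 =>
      rw [cN_nplus]
      simp only [List.map_cons, List.map_nil]
      exact .unfOf (.andPR (.rfocOf ih1) (.rfocOf ih2))
  | orL C h1 h2 ih1 ih2 =>
      rw [cN_fill]
      rw [cN_fill] at ih1 ih2
      exact .orL (cC pol C) ih1 ih2
  | orR1 h ih => exact .unfOf (.orR1 (.rfocOf ih))
  | orR2 h ih => exact .unfOf (.orR2 (.rfocOf ih))
  | @impL Δ φ ψ χ C h1 h2 ih1 ih2 =>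
      rw [cN_fill, cN_nplus]
      simp only [List.map_cons, List.map_nil]
      rw [cN_fill, cN_frm] at ih2
      rw [cN_frm]
      have st := FBI.impL (cC pol C) (.rfocOf ih1) (FBI.upL (cC pol C) ih2)
      have st2 := FBI.exchL st ((cC pol C).fill_congr swapP)
      have st3 : FBI true (.lfoc (((cC pol C).comp (.plus [cN pol Δ] .hole)).fill
          (nf (.imp (posF pol φ) (.shiftU (posF pol ψ))))) (.shiftU (posF pol χ))) := by
        rw [NCtx.fill_comp]; exact st2
      have d := FBI.downL (R := .shiftU (posF pol χ))
        ((cC pol C).comp (.plus [cN pol Δ] .hole)) trivial st3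
      rw [NCtx.fill_comp] at d
      exact .exchU d ((cC pol C).fill_congr swapP)
  | impR h ih =>
      rw [cN_nplus] at ih
      simp only [List.map_cons, List.map_nil] at ih
      exact .unfOf (.downR (.impR ih))
  | starL C h ih =>
      rw [cN_fill]
      rw [cN_fill, cN_ntimes] at ih
      simp only [List.map_cons, List.map_nil] at ih
      exact .starL (cC pol C) ih
  | starR h1 h2 ih1 ih2 =>
      rw [cN_ntimes]
      simp only [List.map_cons, List.map_nil]
      have r := FBI.starR (b := true) [] (.rfocOf ih1) (.rfocOf ih2)
      rw [nplus_single (ntimes_WF (wf_two (cN_WF pol _) (cN_WF pol _)))] at r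
      exact .unfOf r
  | starR' l h1 h2 ih1 ih2 =>
      rw [cN_nplus]
      simp only [List.map_cons]
      rw [cN_ntimes]
      simp only [List.map_cons, List.map_nil]
      exact .unfOf (.starR _ (.rfocOf ih1) (.rfocOf ih2))
  | @wandL Δ φ ψ χ C h1 h2 ih1 ih2 =>
      rw [cN_fill, cN_ntimes]
      simp only [List.map_cons, List.map_nil]
      rw [cN_frm]
      rw [cN_fill, cN_frm] at ih2
      have u : FBI true (.lfoc ((cC pol C).fill
          (ntimes [Nest.times [], nf (.shiftU (posF pol ψ))])) (.shiftU (posF pol χ))) :=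
        FBI.upL (cC pol C) ih2
      have w := FBI.wandL (Δ'' := .plus []) (cC pol C) (.rfocOf ih1) u
      have w2 : FBI true (.lfoc ((cC pol C).fill
          (ntimes [cN pol Δ, nf (.wand (posF pol φ) (.shiftU (posF pol ψ)))]))
          (.shiftU (posF pol χ))) := w
      have st := FBI.exchL w2 ((cC pol C).fill_congr swapT)
      have st3 : FBI true (.lfoc (((cC pol C).comp (.times [cN pol Δ] .hole)).fill
          (nf (.wand (posF pol φ) (.shiftU (posF pol ψ))))) (.shiftU (posF pol χ))) := by
        rw [NCtx.fill_comp]; exact st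
      have d := FBI.downL (R := .shiftU (posF pol χ))
        ((cC pol C).comp (.times [cN pol Δ] .hole)) trivial st3
      rw [NCtx.fill_comp] at d
      exact .exchU d ((cC pol C).fill_congr swapT)
  | @wandL' Δ' φ Δ'' ψ χ Δ''' C h1 h2 ih1 ih2 =>
      rw [cN_fill, cN_ntimes]
      simp only [List.map_cons, List.map_nil]
      rw [cN_nplus]
      simp only [List.map_cons, List.map_nil]
      rw [cN_frm]
      rw [cN_fill, cN_ntimes] at ih2
      simp only [List.map_cons, List.map_nil] at ih2
      rw [cN_frm] at ih2
      have i2' := FBI.exchU ih2 ((cC pol C).fill_congr swapT)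
      have i2'' : FBI true (.unf (((cC pol C).comp (.times [cN pol Δ''] .hole)).fill
          (pf (posF pol ψ))) (.shiftU (posF pol χ))) := by
        rw [NCtx.fill_comp]; exact i2'
      have u := FBI.upL ((cC pol C).comp (.times [cN pol Δ''] .hole)) i2''
      rw [NCtx.fill_comp] at u
      have u2 := FBI.exchL u ((cC pol C).fill_congr swapT)
      have w := FBI.wandL (Δ'' := cN pol Δ''') (cC pol C) (.rfocOf ih1) u2
      -- w : lfoc (fill (ntimes [cN Δ', cN Δ'', nplus [cN Δ''', nf wand]])) R
      have st := FBI.exchL w ((cC pol C).fill_congr (perm3 swapP))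
      have st2 : FBI true (.lfoc (((cC pol C).comp
          (.times [cN pol Δ', cN pol Δ''] (.plus [cN pol Δ'''] .hole))).fill
          (nf (.wand (posF pol φ) (.shiftU (posF pol ψ))))) (.shiftU (posF pol χ))) := by
        rw [NCtx.fill_comp]; exact st
      have d := FBI.downL (R := .shiftU (posF pol χ)) ((cC pol C).comp
          (.times [cN pol Δ', cN pol Δ''] (.plus [cN pol Δ'''] .hole))) trivial st2
      rw [NCtx.fill_comp] at d
      exact .exchU d ((cC pol C).fill_congr (perm3 swapP).symm)
  | wandR h ih =>
      rw [cN_ntimes] at ih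
      simp only [List.map_cons, List.map_nil] at ih
      exact .unfOf (.downR (.wandR ih))

end Simulation

section Final

variable (pol : ℕ → Bool)

/-- Canonical repolarisation of a polarised leaf. -/
def gl : Leaf → Leaf := fun lf => .pos (posF pol lf.dep)

theorem replace_aux_plus (M : NForm) :
    ∀ (l₂ : List (Nest Leaf)),
    (∀ y ∈ l₂, (∀ (C : NCtx Leaf), FBI true (.unf (C.fill (Nest.map (gl pol) y)) M) →
        FBI true (.unf (C.fill y) M)) ∧ y.notPlusRoot) →
    ∀ (l₁ : List (Nest Leaf)), (∀ x ∈ l₁, x.notPlusRoot) → (l₁ ++ l₂).length ≠ 1 →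
    ∀ (C : NCtx Leaf),
    FBI true (.unf (C.fill (.plus (l₁ ++ l₂.map (Nest.map (gl pol))))) M) →
    FBI true (.unf (C.fill (.plus (l₁ ++ l₂))) M) := by
  intro l₂
  induction l₂ with
  | nil => intro _ l₁ _ _ C h; simpa using h
  | cons x l₂ ih =>
      intro hprop l₁ h₁ hlen C h
      have hxp : x.notPlusRoot := (hprop x (by simp)).2
      have hl₂p : ∀ y ∈ l₂.map (Nest.map (gl pol)), y.notPlusRoot := by
        intro y hy; simp at hy; obtain ⟨z, hz, rfl⟩ := hy
        exact Nest.map_notPlusRoot (hprop z (by simp [hz])).2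
      have hroots : ∀ y ∈ l₁ ++ l₂.map (Nest.map (gl pol)), y.notPlusRoot := by
        intro y hy
        rcases List.mem_append.mp hy with hy | hy
        · exact h₁ y hy
        · exact hl₂p y hy
      have hlen' : (Nest.map (gl pol) x :: (l₁ ++ l₂.map (Nest.map (gl pol)))).length ≠ 1 := by
        simp only [List.length_cons, List.length_append, List.length_map,
          ne_eq] at hlen ⊢; omega
      have hlen'' : (x :: (l₁ ++ l₂.map (Nest.map (gl pol)))).length ≠ 1 := by
        simp only [List.length_cons, List.length_append, List.length_map,
          ne_eq] at hlen ⊢; omega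
      have e1 : (NCtx.plus (l₁ ++ l₂.map (Nest.map (gl pol))) .hole).fill
          (Nest.map (gl pol) x)
          = .plus (Nest.map (gl pol) x :: (l₁ ++ l₂.map (Nest.map (gl pol)))) := by
        refine nplus_of_normal hlen' ?_
        intro y hy
        rcases List.mem_cons.mp hy with rfl | hy
        · exact Nest.map_notPlusRoot hxp
        · exact hroots y hy
      have e2 : (NCtx.plus (l₁ ++ l₂.map (Nest.map (gl pol))) .hole).fill x
          = .plus (x :: (l₁ ++ l₂.map (Nest.map (gl pol)))) := by
        refine nplus_of_normal hlen'' ?_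
        intro y hy
        rcases List.mem_cons.mp hy with rfl | hy
        · exact hxp
        · exact hroots y hy
      simp only [List.map_cons] at h
      have pm : (l₁ ++ Nest.map (gl pol) x :: l₂.map (Nest.map (gl pol))).Perm
          (Nest.map (gl pol) x :: (l₁ ++ l₂.map (Nest.map (gl pol)))) :=
        List.perm_middle
      have h1 := FBI.exchU h (C.fill_congr (NestEq.plus (.ofPerm pm)))
      have h2 : FBI true (.unf ((C.comp (.plus (l₁ ++ l₂.map (Nest.map (gl pol))) .hole)).fill
          (Nest.map (gl pol) x)) M) := by
        rw [NCtx.fill_comp, e1]; exact h1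
      have h3 := (hprop x (by simp)).1 _ h2
      rw [NCtx.fill_comp, e2] at h3
      have h4 := FBI.exchU h3 (C.fill_congr (NestEq.plus
        (.ofPerm (List.perm_middle (a := x) (l₁ := l₁)).symm)))
      have h5 : FBI true (.unf (C.fill (.plus ((l₁ ++ [x]) ++ l₂.map (Nest.map (gl pol))))) M) := by
        simpa using h4
      have h6 := ih (fun y hy => hprop y (by simp [hy]))
        (l₁ ++ [x])
        (by intro y hy; rcases List.mem_append.mp hy with hy | hy
            · exact h₁ y hy
            · simp at hy; subst hy; exact hxp)
        (by simp only [List.length_cons, List.length_append, List.length_map,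
              ne_eq] at hlen ⊢; simp; omega) C h5
      have : (l₁ ++ [x]) ++ l₂ = l₁ ++ x :: l₂ := by simp
      rwa [this] at h6

theorem replace_aux_times (M : NForm) :
    ∀ (l₂ : List (Nest Leaf)),
    (∀ y ∈ l₂, (∀ (C : NCtx Leaf), FBI true (.unf (C.fill (Nest.map (gl pol) y)) M) →
        FBI true (.unf (C.fill y) M)) ∧ y.notTimesRoot) →
    ∀ (l₁ : List (Nest Leaf)), (∀ x ∈ l₁, x.notTimesRoot) → (l₁ ++ l₂).length ≠ 1 →
    ∀ (C : NCtx Leaf),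
    FBI true (.unf (C.fill (.times (l₁ ++ l₂.map (Nest.map (gl pol))))) M) →
    FBI true (.unf (C.fill (.times (l₁ ++ l₂))) M) := by
  intro l₂
  induction l₂ with
  | nil => intro _ l₁ _ _ C h; simpa using h
  | cons x l₂ ih =>
      intro hprop l₁ h₁ hlen C h
      have hxp : x.notTimesRoot := (hprop x (by simp)).2
      have hl₂p : ∀ y ∈ l₂.map (Nest.map (gl pol)), y.notTimesRoot := by
        intro y hy; simp at hy; obtain ⟨z, hz, rfl⟩ := hy
        exact Nest.map_notTimesRoot (hprop z (by simp [hz])).2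
      have hroots : ∀ y ∈ l₁ ++ l₂.map (Nest.map (gl pol)), y.notTimesRoot := by
        intro y hy
        rcases List.mem_append.mp hy with hy | hy
        · exact h₁ y hy
        · exact hl₂p y hy
      have hlen' : (Nest.map (gl pol) x :: (l₁ ++ l₂.map (Nest.map (gl pol)))).length ≠ 1 := by
        simp only [List.length_cons, List.length_append, List.length_map,
          ne_eq] at hlen ⊢; omega
      have hlen'' : (x :: (l₁ ++ l₂.map (Nest.map (gl pol)))).length ≠ 1 := by
        simp only [List.length_cons, List.length_append, List.length_map,
          ne_eq] at hlen ⊢; omega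
      have e1 : (NCtx.times (l₁ ++ l₂.map (Nest.map (gl pol))) .hole).fill
          (Nest.map (gl pol) x)
          = .times (Nest.map (gl pol) x :: (l₁ ++ l₂.map (Nest.map (gl pol)))) := by
        refine ntimes_of_normal hlen' ?_
        intro y hy
        rcases List.mem_cons.mp hy with rfl | hy
        · exact Nest.map_notTimesRoot hxp
        · exact hroots y hy
      have e2 : (NCtx.times (l₁ ++ l₂.map (Nest.map (gl pol))) .hole).fill x
          = .times (x :: (l₁ ++ l₂.map (Nest.map (gl pol)))) := by
        refine ntimes_of_normal hlen'' ?_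
        intro y hy
        rcases List.mem_cons.mp hy with rfl | hy
        · exact hxp
        · exact hroots y hy
      simp only [List.map_cons] at h
      have pm : (l₁ ++ Nest.map (gl pol) x :: l₂.map (Nest.map (gl pol))).Perm
          (Nest.map (gl pol) x :: (l₁ ++ l₂.map (Nest.map (gl pol)))) :=
        List.perm_middle
      have h1 := FBI.exchU h (C.fill_congr (NestEq.times (.ofPerm pm)))
      have h2 : FBI true (.unf ((C.comp (.times (l₁ ++ l₂.map (Nest.map (gl pol))) .hole)).fill
          (Nest.map (gl pol) x)) M) := by
        rw [NCtx.fill_comp, e1]; exact h1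
      have h3 := (hprop x (by simp)).1 _ h2
      rw [NCtx.fill_comp, e2] at h3
      have h4 := FBI.exchU h3 (C.fill_congr (NestEq.times
        (.ofPerm (List.perm_middle (a := x) (l₁ := l₁)).symm)))
      have h5 : FBI true (.unf (C.fill (.times ((l₁ ++ [x]) ++ l₂.map (Nest.map (gl pol))))) M) := by
        simpa using h4
      have h6 := ih (fun y hy => hprop y (by simp [hy]))
        (l₁ ++ [x])
        (by intro y hy; rcases List.mem_append.mp hy with hy | hy
            · exact h₁ y hy
            · simp at hy; subst hy; exact hxp)
        (by simp only [List.length_cons, List.length_append, List.length_map,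
              ne_eq] at hlen ⊢; simp; omega) C h5
      have : (l₁ ++ [x]) ++ l₂ = l₁ ++ x :: l₂ := by simp
      rwa [this] at h6

theorem Replace : ∀ (Δ : Nest Leaf), PosNest Δ → Δ.All (Leaf.WFpol pol) → Δ.WF →
    ∀ (C : NCtx Leaf) (M : NForm),
    FBI true (.unf (C.fill (Nest.map (gl pol) Δ)) M) → FBI true (.unf (C.fill Δ) M) := by
  intro Δ
  induction Δ using Nest.rec (motive_2 := fun l => ∀ y ∈ l, PosNest y →
      y.All (Leaf.WFpol pol) → y.WF → ∀ (C : NCtx Leaf) (M : NForm),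
      FBI true (.unf (C.fill (Nest.map (gl pol) y)) M) → FBI true (.unf (C.fill y) M)) with
  | frm lf =>
      intro hpos hpol hwf C M h
      cases hpos with
      | frm hp =>
          cases lf with
          | focN N => exact hp.elim
          | pos P =>
              cases hpol with
              | frm hq => exact .cutP C (.rfocOf (L1p pol P hq)) h
  | plus l ihl =>
      intro hpos hpol hwf C M h
      cases hwf with
      | plus hlen h1 h2 =>
          cases hpos with
          | plus hp =>
              cases hpol with
              | plus hq =>
                  have := replace_aux_plus pol M l
                    (fun y hy => ⟨fun C' h' => ihl y hy (hp y hy) (hq y hy) (h1 y hy) C' M h',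
                      h2 y hy⟩)
                    [] (by simp) (by simpa using hlen) C
                    (by rw [Nest.map, Nest.mapList_eq] at h; simpa using h)
                  simpa using this
  | times l ihl =>
      intro hpos hpol hwf C M h
      cases hwf with
      | times hlen h1 h2 =>
          cases hpos with
          | times hp =>
              cases hpol with
              | times hq =>
                  have := replace_aux_times pol M l
                    (fun y hy => ⟨fun C' h' => ihl y hy (hp y hy) (hq y hy) (h1 y hy) C' M h',
                      h2 y hy⟩)
                    [] (by simp) (by simpa using hlen) C
                    (by rw [Nest.map, Nest.mapList_eq] at h; simpa using h)
                  simpa using this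
  | nil => rename_i y hy _ _ _ _ _ _; simp at hy
  | cons x xs ih1 ih2 =>
      rename_i y hy a b c C M h
      rcases List.mem_cons.mp hy with rfl | hy
      · exact ih1 a b c C M h
      · exact ih2 y hy a b c C M h

end Final

/-- **Completeness of FBI+cut (Lemma 12)**: for any well-formed unfocused
polarised sequent `Γ ⊢ N`, if the depolarised nested sequent `⌊Γ⌋ ⊢ ⌊N⌋` is
provable in ηLBI, then `Γ ⊢ N` is provable in FBI+cut. -/
theorem FBIcut_complete (pol : ℕ → Bool) (Γ : Nest Leaf) (N : NForm)
    (hpos : PosNest Γ) (hwf : Γ.WF) (hpolΓ : Γ.All (Leaf.WFpol pol))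
    (hpolN : N.WFpol pol) :
    NProof (Nest.map Leaf.dep Γ) N.dep → FBI true (.unf Γ N) := by
  intro h
  have SA := StepA pol h
  have e1 : cN pol (Nest.map Leaf.dep Γ) = Nest.map (gl pol) Γ := by
    rw [cN, Nest.map_map]
    exact Nest.norm_of_WF (Nest.WF.map hwf)
  rw [e1] at SA
  have R := Replace pol Γ hpos hpolΓ hwf .hole _ SA
  exact .cutN .hole R (FBI.shiftIn .hole (L2n pol N hpolN))

end BIPaper
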